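/- The set-valued map M is monotone increasing: if x₁, x₂ ∈ ℝ with x₁ < x₂, then for every ξ₁ ∈ M(x₁) and every ξ₂ ∈ M(x₂) one has ξ₁ ≤ ξ₂. -/

import Mathlib

open Filter MeasureTheory

/-- Condition (f): `f` is `C²`, strongly convex (`f'' > 0` everywhere), and
`f' → ∓∞` at `∓∞`. -/
def CondF (f : ℝ → ℝ) : Prop :=
  ContDiff ℝ 2 f ∧ (∀ x, 0 < deriv (deriv f) x) ∧
    Tendsto (deriv f) atBot atBot ∧ Tendsto (deriv f) atTop atTop

/-- The Legendre transform `f*(y) = sup_x (y·x − f(x))`. -/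
noncomputable def legendre (f : ℝ → ℝ) (y : ℝ) : ℝ :=
  sSup (Set.range fun x => y * x - f x)

/-- `U_T(x) = ∫_{x̌}^x u_T`. -/
noncomputable def UT (uT : ℝ → ℝ) (xc x : ℝ) : ℝ := ∫ ξ in xc..x, uT ξ

/-- `U_o^♭(x) = sup_ξ [U_T(ξ) − T f*((ξ−x)/T)]`. -/
noncomputable def Uflat (f : ℝ → ℝ) (T : ℝ) (uT : ℝ → ℝ) (xc x : ℝ) : ℝ :=
  sSup (Set.range fun ξ => UT uT xc ξ - T * legendre f ((ξ - x) / T))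

/-- `M(x)`: the set of maximizers in the definition of `U_o^♭(x)`. -/
def MSet (f : ℝ → ℝ) (T : ℝ) (uT : ℝ → ℝ) (xc x : ℝ) : Set ℝ :=
  {ξ | UT uT xc ξ = Uflat f T uT xc x + T * legendre f ((ξ - x) / T)}

/-- Oleinik condition (O) at `T`. -/
def Oleinik (f : ℝ → ℝ) (T : ℝ) (uT : ℝ → ℝ) : Prop :=
  ∀ x Δ : ℝ, 0 < Δ → deriv f (uT (x + Δ)) - deriv f (uT x) ≤ Δ / T

/-- The Hopf–Lax operator at time `T`: `(S_T U)(x) = inf_ξ [U(ξ) + T f*((x−ξ)/T)]`. -/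
noncomputable def HopfLax (f : ℝ → ℝ) (T : ℝ) (U : ℝ → ℝ) (x : ℝ) : ℝ :=
  sInf (Set.range fun ξ => U ξ + T * legendre f ((x - ξ) / T))

/-- Left continuity of a real function. -/
def LeftCts (u : ℝ → ℝ) : Prop :=
  ∀ x, Tendsto u (nhdsWithin x (Set.Iio x)) (nhds (u x))

/-- `II_T(U_T; J)`: Lipschitz functions with a.e. derivative in `J` evolving into `U_T`
under the Hopf–Lax semigroup. -/
def IIT (f : ℝ → ℝ) (T : ℝ) (uT : ℝ → ℝ) (xc : ℝ) (J : Set ℝ) : Set (ℝ → ℝ) :=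
  {U | (∃ K, LipschitzWith K U) ∧ (∀ᵐ x ∂volume, deriv U x ∈ J) ∧
    ∀ x, HopfLax f T U x = UT uT xc x}

/-- `U_o^♯(x) = sup { U(x) : U ∈ II_T(U_T; J) }`. -/
noncomputable def Usharp (f : ℝ → ℝ) (T : ℝ) (uT : ℝ → ℝ) (xc : ℝ) (J : Set ℝ) (x : ℝ) : ℝ :=
  sSup ((fun U : ℝ → ℝ => U x) '' IIT f T uT xc J)

lemma condF_diff {f : ℝ → ℝ} (hf : CondF f) : Differentiable ℝ f := by
  exact hf.1.differentiable (by norm_num)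

lemma condF_diff_deriv {f : ℝ → ℝ} (hf : CondF f) : Differentiable ℝ (deriv f) := by
  have h2 : ContDiff ℝ ((1 : ℕ) + 1) f := by norm_num [hf.1]
  exact ((contDiff_succ_iff_deriv.mp h2).2.2).differentiable (by norm_num)

lemma condF_strictMono {f : ℝ → ℝ} (hf : CondF f) : StrictMono (deriv f) :=
  strictMono_of_deriv_pos hf.2.1

lemma condF_surj {f : ℝ → ℝ} (hf : CondF f) : Function.Surjective (deriv f) :=
  Continuous.surjective (hf.1.continuous_deriv (by norm_num)) hf.2.2.2 hf.2.2.1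

lemma max_strict {f : ℝ → ℝ} (hf : CondF f) {x₀ y x : ℝ} (hx₀ : deriv f x₀ = y)
    (hne : x ≠ x₀) : y * x - f x < y * x₀ - f x₀ := by
  have hd := condF_diff hf
  have hm := condF_strictMono hf
  rcases hne.lt_or_gt with h | h
  · obtain ⟨c, hc, hc2⟩ := exists_deriv_eq_slope f h hd.continuous.continuousOn
      (fun z _ => (hd z).differentiableWithinAt)
    have : deriv f c < y := hx₀ ▸ hm hc.2
    have hslope : (f x₀ - f x) / (x₀ - x) < y := hc2 ▸ this
    have hpos : 0 < x₀ - x := by linarith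
    rw [div_lt_iff₀ hpos] at hslope
    nlinarith
  · obtain ⟨c, hc, hc2⟩ := exists_deriv_eq_slope f h hd.continuous.continuousOn
      (fun z _ => (hd z).differentiableWithinAt)
    have : y < deriv f c := hx₀ ▸ hm hc.1
    have hslope : y < (f x - f x₀) / (x - x₀) := hc2 ▸ this
    have hpos : 0 < x - x₀ := by linarith
    rw [lt_div_iff₀ hpos] at hslope
    nlinarith

lemma legendre_isGreatest {f : ℝ → ℝ} (hf : CondF f) {x₀ y : ℝ} (hx₀ : deriv f x₀ = y) :
    IsGreatest (Set.range fun x => y * x - f x) (y * x₀ - f x₀) := by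
  constructor
  · exact ⟨x₀, rfl⟩
  · rintro _ ⟨x, rfl⟩
    rcases eq_or_ne x x₀ with rfl | h
    · exact le_rfl
    · exact (max_strict hf hx₀ h).le

lemma legendre_eq {f : ℝ → ℝ} (hf : CondF f) {x₀ y : ℝ} (hx₀ : deriv f x₀ = y) :
    legendre f y = y * x₀ - f x₀ :=
  (legendre_isGreatest hf hx₀).csSup_eq

lemma legendre_le {f : ℝ → ℝ} (hf : CondF f) (y z : ℝ) :
    y * z - f z ≤ legendre f y := by
  obtain ⟨x₀, hx₀⟩ := condF_surj hf y
  exact le_csSup (legendre_isGreatest hf hx₀).bddAbove ⟨z, rfl⟩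

lemma legendre_strictConvexOn {f : ℝ → ℝ} (hf : CondF f) :
    StrictConvexOn ℝ Set.univ (legendre f) := by
  refine ⟨convex_univ, ?_⟩
  intro y₁ _ y₂ _ hne a b ha hb hab
  obtain ⟨xb, hxb⟩ := condF_surj hf (a * y₁ + b * y₂)
  obtain ⟨x₁, hx₁⟩ := condF_surj hf y₁
  obtain ⟨x₂, hx₂⟩ := condF_surj hf y₂
  have hinj := (condF_strictMono hf).injective
  have hne1 : xb ≠ x₁ := by
    intro h; apply hne
    have : a * y₁ + b * y₂ = y₁ := by rw [← hxb, h, hx₁]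
    have hb' : b * (y₂ - y₁) = 0 := by linear_combination this - y₁ * hab
    have := (mul_eq_zero.mp hb').resolve_left (ne_of_gt hb)
    linarith
  have hne2 : xb ≠ x₂ := by
    intro h; apply hne
    have : a * y₁ + b * y₂ = y₂ := by rw [← hxb, h, hx₂]
    have ha' : a * (y₁ - y₂) = 0 := by linear_combination this - y₂ * hab
    have := (mul_eq_zero.mp ha').resolve_left (ne_of_gt ha)
    linarith
  have l1 : y₁ * xb - f xb < legendre f y₁ := by
    rw [legendre_eq hf hx₁]; exact max_strict hf hx₁ hne1
  have l2 : y₂ * xb - f xb < legendre f y₂ := by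
    rw [legendre_eq hf hx₂]; exact max_strict hf hx₂ hne2
  have heq : legendre f (a • y₁ + b • y₂) = (a * y₁ + b * y₂) * xb - f xb := by
    simpa [smul_eq_mul] using legendre_eq hf hxb
  rw [heq]
  have e : (a * y₁ + b * y₂) * xb - f xb
      = a * (y₁ * xb - f xb) + b * (y₂ * xb - f xb) := by linear_combination f xb * hab
  rw [e, smul_eq_mul, smul_eq_mul]
  have m1 := mul_lt_mul_of_pos_left l1 ha
  have m2 := mul_lt_mul_of_pos_left l2 hb
  linarith

lemma legendre_sum_lt {f : ℝ → ℝ} (hf : CondF f) {A D p q : ℝ}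
    (hsum : A + D = p + q) (hpA : p < A) (hqA : q < A) :
    legendre f p + legendre f q < legendre f A + legendre f D := by
  have hDp : D < p := by linarith
  have hAD : A ≠ D := by intro h; rw [h] at hpA; linarith
  have hADpos : 0 < A - D := by linarith
  set a : ℝ := (p - D) / (A - D) with ha_def
  set b : ℝ := (A - p) / (A - D) with hb_def
  have ha : 0 < a := div_pos (by linarith) hADpos
  have hb : 0 < b := div_pos (by linarith) hADpos
  have hab : a + b = 1 := by
    rw [ha_def, hb_def, ← add_div, div_eq_one_iff_eq hADpos.ne']; ring
  have hg := legendre_strictConvexOn hf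
  have h1 : a • A + b • D = p := by
    simp only [smul_eq_mul, ha_def, hb_def]; field_simp; ring
  have h2 : b • A + a • D = q := by
    simp only [smul_eq_mul, ha_def, hb_def]
    rw [div_mul_eq_mul_div, div_mul_eq_mul_div, ← add_div, div_eq_iff hADpos.ne']
    linear_combination (A - D) * hsum
  have c1 := hg.2 (Set.mem_univ A) (Set.mem_univ D) hAD ha hb hab
  have c2 := hg.2 (Set.mem_univ A) (Set.mem_univ D) hAD hb ha (by linarith)
  rw [h1] at c1
  rw [h2] at c2
  simp only [smul_eq_mul] at c1 c2
  have e1 : a * legendre f A + b * legendre f A = legendre f A := by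
    rw [← add_mul, hab, one_mul]
  have e2 : a * legendre f D + b * legendre f D = legendre f D := by
    rw [← add_mul, hab, one_mul]
  linarith

lemma uflat_bdd {f : ℝ → ℝ} (hf : CondF f) {T : ℝ} (hT : 0 < T) {uT : ℝ → ℝ}
    {C : ℝ} (hC : ∀ x, |uT x| ≤ C) (xc x : ℝ) :
    BddAbove (Set.range fun ξ => UT uT xc ξ - T * legendre f ((ξ - x) / T)) := by
  have hC0 : 0 ≤ C := (abs_nonneg _).trans (hC 0)
  refine ⟨C * |x - xc| + T * max (f C) (f (-C)), ?_⟩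
  rintro _ ⟨ξ, rfl⟩
  have hU : |UT uT xc ξ| ≤ C * |ξ - xc| := by
    have h := intervalIntegral.norm_integral_le_of_norm_le_const
      (a := xc) (b := ξ) (C := C) (f := uT) (fun t _ => by simpa using hC t)
    simpa [UT, abs_sub_comm ξ xc] using h
  have hg : C * |ξ - x| - T * max (f C) (f (-C)) ≤ T * legendre f ((ξ - x) / T) := by
    rcases le_total x ξ with h | h
    · have h1 : ((ξ - x) / T) * C - f C ≤ legendre f ((ξ - x) / T) := legendre_le hf _ _
      have h2 : T * (((ξ - x) / T) * C - f C) ≤ T * legendre f ((ξ - x) / T) :=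
        mul_le_mul_of_nonneg_left h1 hT.le
      have he : T * (((ξ - x) / T) * C - f C) = (ξ - x) * C - T * f C := by
        field_simp
      have habs : |ξ - x| = ξ - x := abs_of_nonneg (by linarith)
      have hm : T * f C ≤ T * max (f C) (f (-C)) :=
        mul_le_mul_of_nonneg_left (le_max_left _ _) hT.le
      rw [habs]; linarith [he ▸ h2]
    · have h1 : ((ξ - x) / T) * (-C) - f (-C) ≤ legendre f ((ξ - x) / T) := legendre_le hf _ _
      have h2 : T * (((ξ - x) / T) * (-C) - f (-C)) ≤ T * legendre f ((ξ - x) / T) :=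
        mul_le_mul_of_nonneg_left h1 hT.le
      have he : T * (((ξ - x) / T) * (-C) - f (-C)) = (x - ξ) * C - T * f (-C) := by
        field_simp; ring
      have habs : |ξ - x| = x - ξ := by rw [abs_sub_comm]; exact abs_of_nonneg (by linarith)
      have hm : T * f (-C) ≤ T * max (f C) (f (-C)) :=
        mul_le_mul_of_nonneg_left (le_max_right _ _) hT.le
      rw [habs]; linarith [he ▸ h2]
  have htri : |ξ - xc| ≤ |ξ - x| + |x - xc| := abs_sub_le ξ x xc
  have : UT uT xc ξ ≤ C * |ξ - xc| := (le_abs_self _).trans hU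
  nlinarith [abs_nonneg (ξ - x)]

theorem stmt_7 (f : ℝ → ℝ) (hf : CondF f) (T : ℝ) (hT : 0 < T)
    (uT : ℝ → ℝ) (huT : Measurable uT) (C : ℝ) (hC : ∀ x, |uT x| ≤ C) (xc : ℝ) :
    ∀ x₁ x₂ : ℝ, x₁ < x₂ →
      ∀ ξ₁ ∈ MSet f T uT xc x₁, ∀ ξ₂ ∈ MSet f T uT xc x₂, ξ₁ ≤ ξ₂ := by
  intro x₁ x₂ hx ξ₁ h₁ ξ₂ h₂
  by_contra hcon
  push_neg at hcon
  have key : ∀ x ξ, ξ ∈ MSet f T uT xc x → ∀ η,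
      UT uT xc η - T * legendre f ((η - x) / T) ≤
        UT uT xc ξ - T * legendre f ((ξ - x) / T) := by
    intro x ξ hξ η
    have hξ' : UT uT xc ξ - T * legendre f ((ξ - x) / T) = Uflat f T uT xc x := by
      have := hξ; simp only [MSet, Set.mem_setOf_eq] at this; linarith
    rw [hξ']
    exact le_csSup (uflat_bdd hf hT hC xc x) ⟨η, rfl⟩
  have i1 := key x₁ ξ₁ h₁ ξ₂
  have i2 := key x₂ ξ₂ h₂ ξ₁
  have hsum : (ξ₁ - x₁) / T + (ξ₂ - x₂) / T = (ξ₂ - x₁) / T + (ξ₁ - x₂) / T := by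
    field_simp; ring
  have hpA : (ξ₂ - x₁) / T < (ξ₁ - x₁) / T := by gcongr <;> linarith
  have hqA : (ξ₁ - x₂) / T < (ξ₁ - x₁) / T := by gcongr <;> linarith
  have hlt := legendre_sum_lt hf hsum hpA hqA
  nlinarith [hlt, hT, i1, i2]
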